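/- Let g ∈ L¹(Γ × S¹) satisfy the symmetry relation g(e^{iβ}, e^{iθ}) = g(e^{i(2θ−β−π)}, e^{i(θ+π)}) for almost every (e^{iβ}, e^{iθ}) ∈ Γ × S¹. Then its Fourier coefficients satisfy g_{n,k} = (−1)^{n+k} g_{n+2k,−k} for all n, k ∈ ℤ. -/

import Mathlib

open MeasureTheory Filter Set

noncomputable section

/-- Fourier coefficients of a function on the torus `Γ × S¹`. -/
def fcoef (g : ℝ → ℝ → ℂ) (n k : ℤ) : ℂ :=
  (1 / (2 * Real.pi) ^ 2 : ℂ) *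
    ∫ β in Ioc (-Real.pi) Real.pi,
      ∫ θ in Ioc (-Real.pi) Real.pi,
        g β θ * Complex.exp (-Complex.I * (n : ℂ) * (θ : ℂ)) *
          Complex.exp (-Complex.I * (k : ℂ) * (β : ℂ))

lemma expIpi (m : ℤ) : Complex.exp (Complex.I * (m : ℂ) * (Real.pi : ℂ)) = (-1 : ℂ) ^ m := by
  rw [show Complex.I * (m : ℂ) * (Real.pi : ℂ) = (m : ℂ) * ((Real.pi : ℂ) * Complex.I) by ring,
    Complex.exp_int_mul, Complex.exp_pi_mul_I]

lemma swapInt {f : ℝ → ℝ → ℂ} {s t : Set ℝ}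
    (hf : IntegrableOn (fun q : ℝ × ℝ => f q.1 q.2) (s ×ˢ t)) :
    ∫ x in s, ∫ y in t, f x y = ∫ y in t, ∫ x in s, f x y := by
  apply MeasureTheory.integral_integral_swap
  rwa [Measure.prod_restrict, ← Measure.volume_eq_prod]

lemma integAux {g : ℝ → ℝ → ℂ}
    (hgint : IntegrableOn (fun q : ℝ × ℝ => g q.1 q.2)
      (Ioc (-Real.pi) Real.pi ×ˢ Ioc (-Real.pi) Real.pi)) (m j : ℤ) :
    IntegrableOn (fun q : ℝ × ℝ => g q.1 q.2 * Complex.exp (-Complex.I * (m : ℂ) * (q.2 : ℂ)) *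
      Complex.exp (-Complex.I * (j : ℂ) * (q.1 : ℂ)))
      (Ioc (-Real.pi) Real.pi ×ˢ Ioc (-Real.pi) Real.pi) := by
  have heq : (fun q : ℝ × ℝ => g q.1 q.2 * Complex.exp (-Complex.I * (m : ℂ) * (q.2 : ℂ)) *
      Complex.exp (-Complex.I * (j : ℂ) * (q.1 : ℂ))) =
      fun q : ℝ × ℝ => (Complex.exp (-Complex.I * (m : ℂ) * (q.2 : ℂ)) *
        Complex.exp (-Complex.I * (j : ℂ) * (q.1 : ℂ))) * g q.1 q.2 := by
    funext q; ring
  rw [heq]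
  apply hgint.bdd_mul (c := 1)
  · apply Continuous.aestronglyMeasurable
    fun_prop
  · refine Filter.Eventually.of_forall (fun q => ?_)
    simp only [norm_mul, Complex.norm_exp]
    norm_num [Complex.mul_re, Complex.mul_im]

def Baux (g : ℝ → ℝ → ℂ) (k : ℤ) (t : ℝ) : ℂ :=
  ∫ u in (-Real.pi)..Real.pi, g u t * Complex.exp (Complex.I * (k : ℂ) * (u : ℂ))

def waux (g : ℝ → ℝ → ℂ) (n k : ℤ) (θ : ℝ) : ℂ :=
  Complex.exp (-Complex.I * ((n : ℂ) + 2 * (k : ℂ)) * (θ : ℂ)) * Baux g k θ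

/-- Lemma A.2: the symmetry `g(e^{iβ}, e^{iθ}) = g(e^{i(2θ-β-π)}, e^{i(θ+π)})` (a.e.)
implies `g_{n,k} = (-1)^{n+k} g_{n+2k,-k}` for all `n, k ∈ ℤ`. -/
theorem stmt11 (g : ℝ → ℝ → ℂ)
    (hgper : ∀ β θ : ℝ, g (β + 2 * Real.pi) θ = g β θ ∧ g β (θ + 2 * Real.pi) = g β θ)
    (hgint : IntegrableOn (fun q : ℝ × ℝ => g q.1 q.2)
      (Ioc (-Real.pi) Real.pi ×ˢ Ioc (-Real.pi) Real.pi))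
    (hgsym : ∀ᵐ q : ℝ × ℝ, g q.1 q.2 = g (2 * q.2 - q.1 - Real.pi) (q.2 + Real.pi)) :
    ∀ n k : ℤ, fcoef g n k = (-1 : ℂ) ^ (n + k) * fcoef g (n + 2 * k) (-k) := by
  intro n k
  have hπ : (0 : ℝ) < Real.pi := Real.pi_pos
  have hle : -Real.pi ≤ Real.pi := by linarith
  -- periodicity of Baux and waux
  have hBper : ∀ t, Baux g k (t + 2 * Real.pi) = Baux g k t := by
    intro t
    apply intervalIntegral.integral_congr
    intro u _
    simp only [(hgper u t).2]
  have hwper : Function.Periodic (waux g n k) (2 * Real.pi) := by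
    intro θ
    unfold waux
    rw [hBper]
    congr 1
    rw [show (-Complex.I * ((n : ℂ) + 2 * (k : ℂ)) * ((θ + 2 * Real.pi : ℝ) : ℂ)) =
      -Complex.I * ((n : ℂ) + 2 * (k : ℂ)) * (θ : ℂ) +
        ((-(n + 2 * k) : ℤ) : ℂ) * (2 * Real.pi * Complex.I) by push_cast; ring,
      Complex.exp_add, Complex.exp_int_mul_two_pi_mul_I, mul_one]
  -- a.e. symmetry with θ outer
  have hsym2 : ∀ᵐ θ : ℝ, ∀ᵐ β : ℝ, g β θ = g (2 * θ - β - Real.pi) (θ + Real.pi) := by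
    have h1 : ∀ᵐ q : ℝ × ℝ ∂((volume : Measure ℝ).prod volume),
        g q.1 q.2 = g (2 * q.2 - q.1 - Real.pi) (q.2 + Real.pi) := by
      rw [← Measure.volume_eq_prod]; exact hgsym
    have h2 : ∀ᵐ q : ℝ × ℝ ∂((volume : Measure ℝ).prod volume),
        g q.2 q.1 = g (2 * q.1 - q.2 - Real.pi) (q.1 + Real.pi) :=
      (Measure.measurePreserving_swap).quasiMeasurePreserving.ae h1
    exact Measure.ae_ae_of_ae_prod h2
  calc fcoef g n k
      = (1 / (2 * Real.pi) ^ 2 : ℂ) *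
        ∫ θ in Ioc (-Real.pi) Real.pi, ∫ β in Ioc (-Real.pi) Real.pi,
          g β θ * Complex.exp (-Complex.I * (n : ℂ) * (θ : ℂ)) *
            Complex.exp (-Complex.I * (k : ℂ) * (β : ℂ)) := by
        unfold fcoef
        congr 1
        exact swapInt (f := fun β θ => g β θ * Complex.exp (-Complex.I * (n : ℂ) * (θ : ℂ)) *
          Complex.exp (-Complex.I * (k : ℂ) * (β : ℂ))) (integAux hgint n k)
    _ = (1 / (2 * Real.pi) ^ 2 : ℂ) *
        ∫ θ in Ioc (-Real.pi) Real.pi, ∫ β in Ioc (-Real.pi) Real.pi,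
          g (2 * θ - β - Real.pi) (θ + Real.pi) *
            Complex.exp (-Complex.I * (n : ℂ) * (θ : ℂ)) *
            Complex.exp (-Complex.I * (k : ℂ) * (β : ℂ)) := by
        congr 1
        apply setIntegral_congr_ae measurableSet_Ioc
        filter_upwards [hsym2] with θ hθ _
        apply setIntegral_congr_ae measurableSet_Ioc
        filter_upwards [hθ] with β hβ _
        rw [hβ]
    _ = (1 / (2 * Real.pi) ^ 2 : ℂ) *
        ∫ θ in Ioc (-Real.pi) Real.pi,
          Complex.exp (Complex.I * (k : ℂ) * (Real.pi : ℂ)) *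
            (Complex.exp (-Complex.I * ((n : ℂ) + 2 * (k : ℂ)) * (θ : ℂ)) *
              Baux g k (θ + Real.pi)) := by
        congr 1
        congr 1
        funext θ
        rw [← intervalIntegral.integral_of_le hle]
        have hfun : (fun β : ℝ => g (2 * θ - β - Real.pi) (θ + Real.pi) *
            Complex.exp (-Complex.I * (n : ℂ) * (θ : ℂ)) *
            Complex.exp (-Complex.I * (k : ℂ) * (β : ℂ))) =
            fun β : ℝ => (fun u : ℝ => g u (θ + Real.pi) *
              Complex.exp (-Complex.I * (n : ℂ) * (θ : ℂ)) *
              Complex.exp (-Complex.I * (k : ℂ) * ((2 * θ - Real.pi - u : ℝ) : ℂ)))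
              (2 * θ - Real.pi - β) := by
          funext β
          simp only
          rw [show 2 * θ - β - Real.pi = 2 * θ - Real.pi - β by ring]
          congr 2
          push_cast; ring
        have hsub := intervalIntegral.integral_comp_sub_left (a := -Real.pi) (b := Real.pi)
          (fun u : ℝ => g u (θ + Real.pi) *
            Complex.exp (-Complex.I * (n : ℂ) * (θ : ℂ)) *
            Complex.exp (-Complex.I * (k : ℂ) * ((2 * θ - Real.pi - u : ℝ) : ℂ)))
          (2 * θ - Real.pi)
        rw [hfun, hsub]
        have hper : Function.Periodic (fun u : ℝ => g u (θ + Real.pi) *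
            Complex.exp (-Complex.I * (n : ℂ) * (θ : ℂ)) *
            Complex.exp (-Complex.I * (k : ℂ) * ((2 * θ - Real.pi - u : ℝ) : ℂ))) (2 * Real.pi) := by
          intro u
          simp only
          rw [(hgper u (θ + Real.pi)).1]
          congr 1
          rw [show (-Complex.I * (k : ℂ) * ((2 * θ - Real.pi - (u + 2 * Real.pi) : ℝ) : ℂ)) =
            -Complex.I * (k : ℂ) * ((2 * θ - Real.pi - u : ℝ) : ℂ) +
              ((k : ℤ) : ℂ) * (2 * Real.pi * Complex.I) by push_cast; ring,
            Complex.exp_add, Complex.exp_int_mul_two_pi_mul_I, mul_one]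
        rw [show (2 * θ - Real.pi - Real.pi) = (2 * θ - 2 * Real.pi) by ring,
          show (2 * θ - Real.pi - -Real.pi) = (2 * θ - 2 * Real.pi) + 2 * Real.pi by ring,
          hper.intervalIntegral_add_eq (2 * θ - 2 * Real.pi) (-Real.pi),
          show (-Real.pi + 2 * Real.pi) = Real.pi by ring]
        have hfun2 : (fun u : ℝ => g u (θ + Real.pi) *
            Complex.exp (-Complex.I * (n : ℂ) * (θ : ℂ)) *
            Complex.exp (-Complex.I * (k : ℂ) * ((2 * θ - Real.pi - u : ℝ) : ℂ))) =
            fun u : ℝ => (Complex.exp (Complex.I * (k : ℂ) * (Real.pi : ℂ)) *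
              Complex.exp (-Complex.I * ((n : ℂ) + 2 * (k : ℂ)) * (θ : ℂ))) *
              (g u (θ + Real.pi) * Complex.exp (Complex.I * (k : ℂ) * (u : ℂ))) := by
          funext u
          rw [show (-Complex.I * (k : ℂ) * ((2 * θ - Real.pi - u : ℝ) : ℂ)) =
            (Complex.I * (k : ℂ) * (Real.pi : ℂ)) + (-Complex.I * (2 * (k : ℂ)) * (θ : ℂ)) +
              Complex.I * (k : ℂ) * (u : ℂ) by push_cast; ring,
            Complex.exp_add, Complex.exp_add,
            show -Complex.I * ((n : ℂ) + 2 * (k : ℂ)) * (θ : ℂ) =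
              (-Complex.I * (n : ℂ) * (θ : ℂ)) + (-Complex.I * (2 * (k : ℂ)) * (θ : ℂ)) by ring,
            Complex.exp_add]
          ring
        rw [hfun2, intervalIntegral.integral_const_mul]
        unfold Baux
        ring
    _ = (1 / (2 * Real.pi) ^ 2 : ℂ) *
        (Complex.exp (Complex.I * (k : ℂ) * (Real.pi : ℂ)) *
          (Complex.exp (Complex.I * ((n : ℂ) + 2 * (k : ℂ)) * (Real.pi : ℂ)) *
            ∫ θ in Ioc (-Real.pi) Real.pi, waux g n k θ)) := by
        congr 1
        rw [MeasureTheory.integral_const_mul]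
        congr 1
        rw [← intervalIntegral.integral_of_le hle, ← intervalIntegral.integral_of_le hle]
        have hfun3 : (fun θ : ℝ =>
            Complex.exp (-Complex.I * ((n : ℂ) + 2 * (k : ℂ)) * (θ : ℂ)) *
              Baux g k (θ + Real.pi)) =
            fun θ : ℝ => Complex.exp (Complex.I * ((n : ℂ) + 2 * (k : ℂ)) * (Real.pi : ℂ)) *
              waux g n k (θ + Real.pi) := by
          funext θ
          unfold waux
          rw [← mul_assoc, ← Complex.exp_add]
          congr 2
          push_cast; ring
        rw [hfun3, intervalIntegral.integral_const_mul]
        congr 1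
        rw [intervalIntegral.integral_comp_add_right,
          show -Real.pi + Real.pi = (0 : ℝ) by ring,
          show Real.pi + Real.pi = (0 : ℝ) + 2 * Real.pi by ring,
          hwper.intervalIntegral_add_eq 0 (-Real.pi),
          show -Real.pi + 2 * Real.pi = Real.pi by ring]
    _ = (-1 : ℂ) ^ (n + k) * fcoef g (n + 2 * k) (-k) := by
        have hconst : Complex.exp (Complex.I * (k : ℂ) * (Real.pi : ℂ)) *
            Complex.exp (Complex.I * ((n : ℂ) + 2 * (k : ℂ)) * (Real.pi : ℂ)) =
            (-1 : ℂ) ^ (n + k) := by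
          rw [show ((n : ℂ) + 2 * (k : ℂ)) = (((n + 2 * k : ℤ)) : ℂ) by push_cast; ring,
            expIpi, expIpi,
            ← zpow_add₀ (by norm_num : (-1 : ℂ) ≠ 0),
            show k + (n + 2 * k) = (n + k) + 2 * k by ring,
            zpow_add₀ (by norm_num : (-1 : ℂ) ≠ 0), zpow_mul]
          norm_num
        have hrhs : fcoef g (n + 2 * k) (-k) = (1 / (2 * Real.pi) ^ 2 : ℂ) *
            ∫ θ in Ioc (-Real.pi) Real.pi, waux g n k θ := by
          unfold fcoef
          congr 1
          rw [swapInt (f := fun β θ => g β θ *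
            Complex.exp (-Complex.I * ((n + 2 * k : ℤ) : ℂ) * (θ : ℂ)) *
            Complex.exp (-Complex.I * ((-k : ℤ) : ℂ) * (β : ℂ))) (integAux hgint (n + 2 * k) (-k))]
          congr 1
          funext θ
          rw [← intervalIntegral.integral_of_le hle]
          have hfun4 : (fun β : ℝ => g β θ *
              Complex.exp (-Complex.I * ((n + 2 * k : ℤ) : ℂ) * (θ : ℂ)) *
              Complex.exp (-Complex.I * ((-k : ℤ) : ℂ) * (β : ℂ))) =
              fun β : ℝ => Complex.exp (-Complex.I * ((n : ℂ) + 2 * (k : ℂ)) * (θ : ℂ)) *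
                (g β θ * Complex.exp (Complex.I * (k : ℂ) * (β : ℂ))) := by
            funext β
            rw [show (-Complex.I * ((-k : ℤ) : ℂ) * (β : ℂ)) = Complex.I * (k : ℂ) * (β : ℂ) by
                push_cast; ring,
              show (-Complex.I * ((n + 2 * k : ℤ) : ℂ) * (θ : ℂ)) =
                -Complex.I * ((n : ℂ) + 2 * (k : ℂ)) * (θ : ℂ) by push_cast; ring]
            ring
          rw [hfun4, intervalIntegral.integral_const_mul]
          unfold waux Baux
          rfl
        rw [hrhs, ← hconst]
        ring
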